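/- arXiv:2212.07870 — 2 statements merged into one kernel-verified Lean document; each statement's English description precedes it below -/
import Mathlib

section
/- If G is a DAG in the class S_k (μ_s(v) ≤ k for every vertex v), then G is a k-funnel: every source-to-sink path contains an edge e with μ(e) ≤ k. -/
open List

section Defs

variable {V : Type*} {α : Type*}

/-- A border of `t` is a proper prefix of `t` that is also a proper suffix of `t`. -/
def IsBorder (b t : List α) : Prop :=
  b <+: t ∧ b <:+ t ∧ b.length < t.length

/-- A directed graph (edge relation) is acyclic. -/
def Acyclic (E : V → V → Prop) : Prop :=
  ∀ v, ¬ Relation.TransGen E v v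

def IsSource (E : V → V → Prop) (v : V) : Prop := ∀ u, ¬ E u v

def IsSink (E : V → V → Prop) (v : V) : Prop := ∀ w, ¬ E v w

/-- A path is a nonempty list of vertices with consecutive edges. -/
def IsPath (E : V → V → Prop) (p : List V) : Prop := p ≠ [] ∧ p.Chain' E

/-- The edge `(u,v)` occurs (as a consecutive pair) on the path `p`. -/
def EdgeOn (p : List V) (u v : V) : Prop := ∃ l₁ l₂, p = l₁ ++ u :: v :: l₂

/-- A source-to-sink path. -/
def SrcSinkPath (E : V → V → Prop) (p : List V) : Prop :=
  IsPath E p ∧ (∃ s, p.head? = some s ∧ IsSource E s) ∧ ∃ t, p.getLast? = some t ∧ IsSink E t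

/-- `μ_s(v)`: the number of source-to-`v` paths. -/
noncomputable def muS (E : V → V → Prop) (v : V) : ℕ :=
  Set.ncard {p : List V | IsPath E p ∧ (∃ s, p.head? = some s ∧ IsSource E s) ∧ p.getLast? = some v}

/-- `μ_t(v)`: the number of `v`-to-sink paths. -/
noncomputable def muT (E : V → V → Prop) (v : V) : ℕ :=
  Set.ncard {p : List V | IsPath E p ∧ p.head? = some v ∧ ∃ t, p.getLast? = some t ∧ IsSink E t}

/-- `μ(e)` for `e = (u,v)`: the number of source-to-sink paths containing the edge `(u,v)`. -/
noncomputable def muE (E : V → V → Prop) (u v : V) : ℕ :=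
  Set.ncard {p : List V | SrcSinkPath E p ∧ EdgeOn p u v}

def NoIsolated (E : V → V → Prop) : Prop := ∀ v : V, (∃ u, E u v) ∨ ∃ w, E v w

/-- `G` is a `k`-funnel: every source-to-sink path contains a `k`-private edge. -/
def KFunnel (E : V → V → Prop) (k : ℕ) : Prop :=
  ∀ p, SrcSinkPath E p → ∃ u v, EdgeOn p u v ∧ muE E u v ≤ k

/-- `G` is a funnel: every source-to-sink path contains a private edge. -/
def Funnel (E : V → V → Prop) : Prop :=
  ∀ p, SrcSinkPath E p → ∃ u v, EdgeOn p u v ∧ muE E u v = 1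

/-- `B_v`: the set of lengths `i` such that some path ending at `v` spells `S[1..i]`
(with `0` included for the empty path). -/
def MatchSet (E : V → V → Prop) (ℓ : V → α) (S : List α) (v : V) : Set ℕ :=
  {i | i ≤ S.length ∧ (i = 0 ∨ ∃ p, IsPath E p ∧ p.getLast? = some v ∧ p.map ℓ = S.take i)}

end Defs

section Aux

variable {V : Type*}

lemma chain_transGen {E : V → V → Prop} : ∀ {l : List V} {a b : V},
    List.Chain E a l → b ∈ l → Relation.TransGen E a b := by
  intro l
  induction l with
  | nil => intro a b _ hb; simp at hb
  | cons x t ih =>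
    intro a b hc hb
    rcases List.chain_cons.1 hc with ⟨hax, hct⟩
    rcases List.mem_cons.1 hb with rfl | hb
    · exact Relation.TransGen.single hax
    · exact Relation.TransGen.head hax (ih hct hb)

lemma chain'_nodup {E : V → V → Prop} (hE : Acyclic E) :
    ∀ {p : List V}, p.Chain' E → p.Nodup := by
  intro p
  induction p with
  | nil => intro _; simp
  | cons a t ih =>
    intro hc
    have hct : List.Chain E a t := hc
    refine List.nodup_cons.2 ⟨fun ha => hE a (chain_transGen hct ha), ih hc.tail⟩

lemma muS_set_finite {V : Type*} [Fintype V] (E : V → V → Prop) (hE : Acyclic E) (v : V) :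
    {p : List V | IsPath E p ∧ (∃ s, p.head? = some s ∧ IsSource E s) ∧ p.getLast? = some v}.Finite := by
  apply (List.finite_length_le V (Fintype.card V)).subset
  rintro p ⟨⟨_, hch⟩, _, _⟩
  exact (chain'_nodup hE hch).length_le_card

end Aux

/-- If `μ_s(v) ≤ k` for every vertex (class `S_k`), then `G` is a `k`-funnel. -/
theorem stmt9 {V : Type*} [Fintype V] (E : V → V → Prop) (hE : Acyclic E)
    (hni : NoIsolated E) (k : ℕ) (h : ∀ v, muS E v ≤ k) :
    KFunnel E k := by
  intro p hp
  obtain ⟨⟨hne, hch⟩, ⟨s, hs, hsrc⟩, ⟨t, ht, hsink⟩⟩ := hp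
  have hdl : p = p.dropLast ++ [t] := by
    have h1 : some (p.getLast hne) = some t := by
      rw [← List.getLast?_eq_getLast hne, ht]
    have h2 := List.dropLast_append_getLast hne
    rw [Option.some.injEq] at h1
    rw [h1] at h2
    exact h2.symm
  -- dropLast is nonempty: otherwise p = [t], a source and a sink, contradicting NoIsolated
  have hdne : p.dropLast ≠ [] := by
    intro hnil
    rw [hnil] at hdl
    simp at hdl
    rw [hdl] at hs ht
    simp at hs
    rcases hni t with ⟨u, hu⟩ | ⟨w, hw⟩
    · exact hsrc u (hs ▸ hu)
    · exact hsink w hw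
  obtain ⟨q, u, hqu⟩ : ∃ q u, p.dropLast = q ++ [u] :=
    ⟨p.dropLast.dropLast, p.dropLast.getLast hdne, (List.dropLast_append_getLast hdne).symm⟩
  have hpform : p = q ++ u :: t :: [] := by
    rw [hdl, hqu]; simp
  refine ⟨u, t, ⟨q, [], hpform⟩, ?_⟩
  calc muE E u t ≤ muS E t := by
        apply Set.ncard_le_ncard ?_ (muS_set_finite E hE t)
        rintro r ⟨⟨⟨hne', hch'⟩, hsrc', t', ht', hsink'⟩, l₁, l₂, rfl⟩
        refine ⟨⟨hne', hch'⟩, hsrc', ?_⟩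
        have hl₂ : l₂ = [] := by
          cases l₂ with
          | nil => rfl
          | cons w l₂' =>
            exfalso
            have hsuf : (u :: t :: w :: l₂') <:+ (l₁ ++ u :: t :: w :: l₂') :=
              ⟨l₁, rfl⟩
            have hcs := hch'.suffix hsuf
            rw [List.isChain_cons_cons, List.isChain_cons_cons] at hcs
            exact hsink w hcs.2.1
        subst hl₂
        rw [show l₁ ++ [u, t] = (l₁ ++ [u]) ++ [t] by simp]
        rw [List.getLast?_concat]
    _ ≤ k := h t
end

section
/- Every k-funnel is in the class ST_k: if every source-to-sink path of a DAG G contains an edge e with μ(e) ≤ k, then every vertex v satisfies μ_s(v) ≤ k or μ_t(v) ≤ k. -/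
open List

section Aux

variable {V : Type*}

private lemma chain_last_tg {E : V → V → Prop} :
    ∀ (l : List V) {x y : V}, List.Chain E x (l ++ [y]) → Relation.TransGen E x y := by
  intro l
  induction l with
  | nil =>
    intro x y h
    exact Relation.TransGen.single (List.chain_cons.1 h).1
  | cons z l ih =>
    intro x y h
    rw [List.cons_append] at h; replace h := List.isChain_cons_cons.1 h
    exact Relation.TransGen.head h.1 (ih h.2)

private lemma path_nodup {E : V → V → Prop} (hE : Acyclic E) {p : List V}
    (hp : p.Chain' E) : p.Nodup := by
  by_contra hnd
  obtain ⟨x, hx⟩ := List.exists_duplicate_iff_not_nodup.2 hnd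
  rw [List.duplicate_iff_sublist, List.cons_sublist_iff] at hx
  obtain ⟨r₁, r₂, hpe, hx1, hx2⟩ := hx
  have hx2' : x ∈ r₂ := by simpa using hx2.subset (by simp)
  obtain ⟨a, b, rfl⟩ := List.append_of_mem hx1
  obtain ⟨c, d, rfl⟩ := List.append_of_mem hx2'
  have hinf : (x :: (b ++ c ++ [x])) <:+: ((a ++ x :: b) ++ (c ++ x :: d)) :=
    ⟨a, d, by simp⟩
  rw [← hpe] at hinf
  have hch : List.Chain' E (x :: (b ++ c ++ [x])) := hp.infix hinf
  exact hE x (chain_last_tg (b ++ c) hch)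

private lemma acyclic_wf {E : V → V → Prop} [Fintype V]
    (hE : ∀ v, ¬ Relation.TransGen E v v) : WellFounded E := by
  haveI : IsIrrefl V (Relation.TransGen E) := ⟨hE⟩
  exact Subrelation.wf (fun h => Relation.TransGen.single h)
    (Finite.wellFounded_of_trans_of_irrefl _)

private lemma exists_src_path {E : V → V → Prop} [Fintype V] (hE : Acyclic E) (v : V) :
    ∃ p, IsPath E p ∧ (∃ s, p.head? = some s ∧ IsSource E s) ∧ p.getLast? = some v := by
  have wf : WellFounded E := acyclic_wf hE
  induction v using wf.induction with
  | _ v ih =>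
    by_cases hs : IsSource E v
    · exact ⟨[v], ⟨by simp, List.isChain_singleton v⟩, ⟨v, by simp, hs⟩, by simp⟩
    · obtain ⟨u, hu⟩ : ∃ u, E u v := by simpa [IsSource] using hs
      obtain ⟨p, ⟨hne, hch⟩, ⟨s, hs1, hs2⟩, hlast⟩ := ih u hu
      refine ⟨p ++ [v], ⟨by simp, ?_⟩, ⟨s, ?_, hs2⟩, by simp⟩
      · refine hch.append (List.isChain_singleton v) ?_
        intro x hx y hy
        simp only [List.head?_cons, Option.mem_def, Option.some.injEq] at hy
        rw [Option.mem_def, hlast, Option.some.injEq] at hx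
        subst hx; subst hy; exact hu
      · rwa [List.head?_append_of_ne_nil _ hne]

private lemma exists_sink_path {E : V → V → Prop} [Fintype V] (hE : Acyclic E) (v : V) :
    ∃ q, IsPath E q ∧ q.head? = some v ∧ ∃ t, q.getLast? = some t ∧ IsSink E t := by
  have wf : WellFounded (fun a b : V => E b a) := by
    apply acyclic_wf
    intro w hw
    exact hE w ((Relation.transGen_swap).1 hw)
  induction v using wf.induction with
  | _ v ih =>
    by_cases hs : IsSink E v
    · exact ⟨[v], ⟨by simp, List.isChain_singleton v⟩, by simp, ⟨v, by simp, hs⟩⟩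
    · obtain ⟨w, hw⟩ : ∃ w, E v w := by simpa [IsSink] using hs
      obtain ⟨q, ⟨hne, hch⟩, hh, ⟨t, ht1, ht2⟩⟩ := ih w hw
      refine ⟨v :: q, ⟨by simp, ?_⟩, by simp, ⟨t, ?_, ht2⟩⟩
      · refine List.isChain_cons.2 ?_
        refine ⟨?_, hch⟩
        intro y hy
        rw [Option.mem_def, hh, Option.some.injEq] at hy
        subst hy; exact hw
      · cases q with
        | nil => exact absurd rfl hne
        | cons y q' => rw [List.getLast?_cons_cons]; exact ht1

private lemma paths_finite {E : V → V → Prop} [Fintype V] (hE : Acyclic E)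
    (s : Set (List V)) (hs : ∀ p ∈ s, p.Chain' E) : s.Finite := by
  refine Set.Finite.subset (List.finite_length_le V (Fintype.card V)) ?_
  intro p hp
  exact (path_nodup hE (hs p hp)).length_le_card

private lemma append_eq_split {u w : V} : ∀ (a : List V) (l1 b l2 : List V),
    a ++ b = l1 ++ u :: w :: l2 →
    (∃ l2', a = l1 ++ u :: w :: l2') ∨ (∃ l1', b = l1' ++ u :: w :: l2) ∨
      (a = l1 ++ [u] ∧ b = w :: l2)
  | [], l1, b, l2, h => Or.inr (Or.inl ⟨l1, by simpa using h⟩)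
  | x :: a, [], b, l2, h => by
    simp only [List.cons_append, List.nil_append, List.cons.injEq] at h
    obtain ⟨rfl, h2⟩ := h
    cases a with
    | nil => exact Or.inr (Or.inr ⟨by simp, by simpa using h2⟩)
    | cons y a' =>
      simp only [List.cons_append, List.cons.injEq] at h2
      obtain ⟨rfl, h3⟩ := h2
      exact Or.inl ⟨a', by simp⟩
  | x :: a, z :: l1, b, l2, h => by
    simp only [List.cons_append, List.cons.injEq] at h
    obtain ⟨rfl, h2⟩ := h
    rcases append_eq_split a l1 b l2 h2 with ⟨l2', rfl⟩ | hb | ⟨rfl, rfl⟩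
    · exact Or.inl ⟨l2', by simp⟩
    · exact Or.inr (Or.inl hb)
    · exact Or.inr (Or.inr ⟨by simp, rfl⟩)

private lemma muT_le_muE {E : V → V → Prop} [Fintype V] (hE : Acyclic E) {v u w : V}
    {p : List V} (hp : IsPath E p) (hsrc : ∃ s, p.head? = some s ∧ IsSource E s)
    (hlast : p.getLast? = some v) (he : EdgeOn p u w) :
    muT E v ≤ muE E u w := by
  classical
  set T := {q : List V | IsPath E q ∧ q.head? = some v ∧ ∃ t, q.getLast? = some t ∧ IsSink E t}
    with hT
  have hmap : ∀ q ∈ T, p ++ q.tail ∈ {r : List V | SrcSinkPath E r ∧ EdgeOn r u w} := by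
    rintro q ⟨⟨hqne, hqch⟩, hqh, t, hqt, hts⟩
    obtain ⟨qt, rfl⟩ := List.head?_eq_some_iff.1 hqh
    simp only [List.tail_cons, Set.mem_setOf_eq]
    refine ⟨⟨⟨by simp [hp.1], ?_⟩, ?_, ?_⟩, ?_⟩
    · refine hp.2.append hqch.tail ?_
      intro x hx y hy
      rw [Option.mem_def, hlast, Option.some.injEq] at hx
      subst hx
      exact (List.isChain_cons.1 hqch).1 y hy
    · obtain ⟨s, hs1, hs2⟩ := hsrc
      exact ⟨s, by rwa [List.head?_append_of_ne_nil _ hp.1], hs2⟩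
    · refine ⟨t, ?_, hts⟩
      cases qt with
      | nil =>
        simp only [List.getLast?_singleton, Option.some.injEq] at hqt
        subst hqt
        simpa using hlast
      | cons y q' =>
        rw [List.getLast?_append_of_ne_nil _ (by simp)]
        rw [List.getLast?_cons_cons] at hqt
        exact hqt
    · obtain ⟨l1, l2, hd⟩ := he
      exact ⟨l1, l2 ++ qt, by rw [hd]; simp⟩
  have hinj : Set.InjOn (fun q : List V => p ++ q.tail) T := by
    rintro q1 ⟨_, h1, _⟩ q2 ⟨_, h2, _⟩ heq
    obtain ⟨t1, rfl⟩ := List.head?_eq_some_iff.1 h1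
    obtain ⟨t2, rfl⟩ := List.head?_eq_some_iff.1 h2
    simp only [List.tail_cons] at heq
    rw [List.append_cancel_left heq]
  have hfin : {r : List V | SrcSinkPath E r ∧ EdgeOn r u w}.Finite :=
    paths_finite hE _ (fun r hr => hr.1.1.2)
  calc muT E v = T.ncard := rfl
    _ = ((fun q : List V => p ++ q.tail) '' T).ncard := (Set.ncard_image_of_injOn hinj).symm
    _ ≤ _ := Set.ncard_le_ncard (by rintro r ⟨q, hq, rfl⟩; exact hmap q hq) hfin

private lemma muS_le_muE {E : V → V → Prop} [Fintype V] (hE : Acyclic E) {v u w : V}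
    {q : List V} (hq : IsPath E q) (hqh : q.head? = some v)
    (hsink : ∃ t, q.getLast? = some t ∧ IsSink E t) (he : EdgeOn q u w) :
    muS E v ≤ muE E u w := by
  classical
  obtain ⟨qt, rfl⟩ := List.head?_eq_some_iff.1 hqh
  set T := {r : List V | IsPath E r ∧ (∃ s, r.head? = some s ∧ IsSource E s) ∧
    r.getLast? = some v} with hT
  have hmap : ∀ r ∈ T, r ++ qt ∈ {r : List V | SrcSinkPath E r ∧ EdgeOn r u w} := by
    rintro r ⟨⟨hrne, hrch⟩, ⟨s, hs1, hs2⟩, hrl⟩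
    obtain ⟨rd, rfl⟩ := List.getLast?_eq_some_iff.1 hrl
    simp only [Set.mem_setOf_eq]
    refine ⟨⟨⟨by simp, ?_⟩, ?_, ?_⟩, ?_⟩
    · refine hrch.append hq.2.tail ?_
      intro x hx y hy
      rw [Option.mem_def, List.getLast?_concat, Option.some.injEq] at hx
      subst hx
      exact (List.isChain_cons.1 hq.2).1 y hy
    · exact ⟨s, by rwa [List.head?_append_of_ne_nil _ (by simp)], hs2⟩
    · obtain ⟨t, ht1, ht2⟩ := hsink
      refine ⟨t, ?_, ht2⟩
      cases qt with
      | nil =>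
        simp only [List.getLast?_singleton, Option.some.injEq] at ht1
        subst ht1
        simp
      | cons y q' =>
        rw [List.getLast?_append_of_ne_nil _ (by simp)]
        rw [List.getLast?_cons_cons] at ht1
        exact ht1
    · obtain ⟨l1, l2, hd⟩ := he
      cases l1 with
      | nil =>
        simp only [List.nil_append, List.cons.injEq] at hd
        obtain ⟨rfl, rfl⟩ := hd
        exact ⟨rd, l2, by simp⟩
      | cons z l1' =>
        simp only [List.cons_append, List.cons.injEq] at hd
        exact ⟨rd ++ v :: l1', l2, by rw [hd.2]; simp⟩
  have hinj : Set.InjOn (fun r : List V => r ++ qt) T := by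
    rintro r1 _ r2 _ heq
    simpa using List.append_cancel_right heq
  have hfin : {r : List V | SrcSinkPath E r ∧ EdgeOn r u w}.Finite :=
    paths_finite hE _ (fun r hr => hr.1.1.2)
  calc muS E v = T.ncard := rfl
    _ = ((fun r : List V => r ++ qt) '' T).ncard := (Set.ncard_image_of_injOn hinj).symm
    _ ≤ _ := Set.ncard_le_ncard (by rintro r ⟨r', hr', rfl⟩; exact hmap r' hr') hfin

end Aux

/-- Every `k`-funnel is in `ST_k`: each vertex has `μ_s(v) ≤ k` or `μ_t(v) ≤ k`. -/
theorem stmt11 {V : Type*} [Fintype V] (E : V → V → Prop) (hE : Acyclic E)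
    (hni : NoIsolated E) (k : ℕ) (h : KFunnel E k) :
    ∀ v, muS E v ≤ k ∨ muT E v ≤ k := by
  intro v
  obtain ⟨p, hpP, hpsrc, hpl⟩ := exists_src_path hE v
  obtain ⟨q, hqP, hqh, hqsink⟩ := exists_sink_path hE v
  obtain ⟨pd, hpd⟩ := List.getLast?_eq_some_iff.1 hpl
  obtain ⟨qt, hqt⟩ := List.head?_eq_some_iff.1 hqh
  have hP : SrcSinkPath E (p ++ qt) := by
    refine ⟨⟨by simp [hpP.1], ?_⟩, ?_, ?_⟩
    · refine hpP.2.append ?_ ?_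
      · have := hqP.2.tail
        rwa [hqt] at this
      · intro x hx y hy
        rw [Option.mem_def, hpl, Option.some.injEq] at hx
        subst hx
        have := (List.isChain_cons.1 (hqt ▸ hqP.2)).1
        exact this y hy
    · obtain ⟨s, hs1, hs2⟩ := hpsrc
      exact ⟨s, by rwa [List.head?_append_of_ne_nil _ hpP.1], hs2⟩
    · obtain ⟨t, ht1, ht2⟩ := hqsink
      refine ⟨t, ?_, ht2⟩
      cases qt with
      | nil =>
        rw [hqt] at ht1
        simp only [List.getLast?_singleton, Option.some.injEq] at ht1
        subst ht1
        simpa using hpl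
      | cons y q' =>
        rw [List.getLast?_append_of_ne_nil _ (by simp)]
        rw [hqt, List.getLast?_cons_cons] at ht1
        exact ht1
  obtain ⟨u, w, ⟨l1, l2, hPe⟩, hk⟩ := h (p ++ qt) hP
  rcases append_eq_split p l1 qt l2 hPe with ⟨l2', hdp⟩ | ⟨l1', hdq⟩ | ⟨hdp, hdq⟩
  · right
    exact le_trans (muT_le_muE hE hpP hpsrc hpl ⟨l1, l2', hdp⟩) hk
  · left
    refine le_trans (muS_le_muE hE hqP hqh hqsink ⟨v :: l1', l2, ?_⟩) hk
    rw [hqt, hdq]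
    rfl
  · left
    have hu : v = u := by
      rw [hpd] at hdp
      have := List.append_inj_right' hdp (by simp)
      simpa using this
    refine le_trans (muS_le_muE hE hqP hqh hqsink ⟨[], l2, ?_⟩) hk
    rw [hqt, hdq, hu]
    rfl
end
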